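/- If η, χ are finite measures on ℝ with finite first moments, equal total mass, and η ≤_E χ (∫f dη ≤ ∫f dχ for all nonnegative convex f), then η ≤_cx χ (∫f dη ≤ ∫f dχ for all convex f). -/

import Mathlib

open MeasureTheory Set Filter

noncomputable def pot (eta : Measure ℝ) (k : ℝ) : ℝ := ∫ x, max (k - x) 0 ∂eta

noncomputable def cpot (eta : Measure ℝ) (k : ℝ) : ℝ := ∫ x, max (x - k) 0 ∂eta

/-- `c` is the convex hull (largest convex minorant) of `f`. -/
def IsConvexHull (f c : ℝ → ℝ) : Prop :=
  ConvexOn ℝ Set.univ c ∧ (∀ x, c x ≤ f x) ∧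
    ∀ g : ℝ → ℝ, ConvexOn ℝ Set.univ g → (∀ x, g x ≤ f x) → ∀ x, g x ≤ c x

/-- Convex order: `∫ f dη ≤ ∫ f dχ` for all convex `f` for which both integrals exist. -/
def Cx (eta chi : Measure ℝ) : Prop :=
  ∀ f : ℝ → ℝ, ConvexOn ℝ Set.univ f → Integrable f eta → Integrable f chi →
    ∫ x, f x ∂eta ≤ ∫ x, f x ∂chi

/-- Extended convex order: `∫ f dη ≤ ∫ f dχ` for all nonnegative convex `f`. -/
def ECx (eta chi : Measure ℝ) : Prop :=
  ∀ f : ℝ → ℝ, ConvexOn ℝ Set.univ f → (∀ x, 0 ≤ f x) →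
    ∫⁻ x, ENNReal.ofReal (f x) ∂eta ≤ ∫⁻ x, ENNReal.ofReal (f x) ∂chi

/-- The class `𝒟(a, b)`: nonnegative, nondecreasing, convex functions vanishing at `-∞`
and asymptotic to `a * z - b` at `+∞`. -/
def MemD (a b : ℝ) (f : ℝ → ℝ) : Prop :=
  ConvexOn ℝ Set.univ f ∧ Monotone f ∧ (∀ x, 0 ≤ f x) ∧
    Tendsto f atBot (nhds 0) ∧
    Tendsto (fun z => f z - (a * z - b)) atTop (nhds 0)

/-- `S` is the shadow of `μ` in `ν`. -/
def IsShadow (mu nu S : Measure ℝ) : Prop :=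
  Cx mu S ∧ S ≤ nu ∧ ∀ eta : Measure ℝ, Cx mu eta → eta ≤ nu → Cx S eta

/-- `T` is the counter-shadow of `μ` in `ν`. -/
def IsCounterShadow (mu nu T : Measure ℝ) : Prop :=
  Cx mu T ∧ T ≤ nu ∧ ∀ eta : Measure ℝ, Cx mu eta → eta ≤ nu → Cx eta T

section Aux

lemma convexOn_max_sub (k : ℝ) : ConvexOn ℝ Set.univ (fun x : ℝ => max (x - k) 0) := by
  have h1 : ConvexOn ℝ Set.univ (fun x : ℝ => x - k) :=
    (convexOn_id convex_univ).sub (concaveOn_const k convex_univ)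
  simpa [Pi.sup_def, max_comm] using h1.sup (convexOn_const 0 convex_univ)

lemma convexOn_max_sub' (k : ℝ) : ConvexOn ℝ Set.univ (fun x : ℝ => max (k - x) 0) := by
  have h0 : ConcaveOn ℝ Set.univ (fun x : ℝ => x - k) :=
    (concaveOn_id convex_univ).sub (convexOn_const k convex_univ)
  have h1 : ConvexOn ℝ Set.univ (fun x : ℝ => k - x) := by
    simpa [Pi.neg_def, neg_sub] using h0.neg
  simpa [Pi.sup_def, max_comm] using h1.sup (convexOn_const 0 convex_univ)

lemma exists_affine_minorant {f : ℝ → ℝ} (hf : ConvexOn ℝ Set.univ f) :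
    ∃ a : ℝ, ∀ x, f 0 + a * x ≤ f x := by
  set S := {s : ℝ | ∃ y, 0 < y ∧ s = (f y - f 0) / (y - 0)} with hS
  have hne : S.Nonempty := ⟨(f 1 - f 0) / (1 - 0), 1, one_pos, rfl⟩
  have hkey : ∀ x, x < 0 → ∀ y, 0 < y →
      (f 0 - f x) / (0 - x) ≤ (f y - f 0) / (y - 0) := fun x hx y hy =>
    hf.slope_mono_adjacent (mem_univ x) (mem_univ y) hx hy
  have hbdd : BddBelow S := by
    refine ⟨(f 0 - f (-1)) / (0 - (-1)), fun s hs => ?_⟩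
    obtain ⟨y, hy, rfl⟩ := hs
    exact hkey (-1) (by norm_num) y hy
  refine ⟨sInf S, fun x => ?_⟩
  rcases lt_trichotomy x 0 with hx | hx | hx
  · have h1 : (f 0 - f x) / (0 - x) ≤ sInf S := by
      refine le_csInf hne ?_
      rintro s ⟨y, hy, rfl⟩
      exact hkey x hx y hy
    have hx' : (0:ℝ) < 0 - x := by linarith
    rw [div_le_iff₀ hx'] at h1
    nlinarith
  · simp [hx]
  · have h1 : sInf S ≤ (f x - f 0) / (x - 0) := csInf_le hbdd ⟨x, hx, rfl⟩
    rw [le_div_iff₀ (by linarith : (0:ℝ) < x - 0)] at h1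
    linarith

end Aux

section MT

variable {eta chi : Measure ℝ}

lemma ecx_mono (hE : ECx eta chi)
    {f : ℝ → ℝ} (hc : ConvexOn ℝ Set.univ f) (hp : ∀ x, 0 ≤ f x)
    (h1 : Integrable f eta) (h2 : Integrable f chi) :
    ∫ x, f x ∂eta ≤ ∫ x, f x ∂chi := by
  rw [integral_eq_lintegral_of_nonneg_ae (ae_of_all _ hp) h1.1,
      integral_eq_lintegral_of_nonneg_ae (ae_of_all _ hp) h2.1]
  exact ENNReal.toReal_mono h2.lintegral_lt_top.ne (hE f hc hp)

lemma int_max1' [IsFiniteMeasure eta] (h : Integrable (fun x => x) eta) (k : ℝ) :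
    Integrable (fun x : ℝ => max (x - k) 0) eta :=
  (h.sub (integrable_const k)).pos_part

lemma int_max2' [IsFiniteMeasure eta] (h : Integrable (fun x => x) eta) (k : ℝ) :
    Integrable (fun x : ℝ => max (k - x) 0) eta :=
  ((integrable_const k).sub h).pos_part

lemma cpot_eq [IsFiniteMeasure eta] (h : Integrable (fun x => x) eta) (k : ℝ) :
    cpot eta k = pot eta k + ∫ x, x ∂eta - k * (eta Set.univ).toReal := by
  have hpt : ∀ x : ℝ, max (x - k) 0 = max (k - x) 0 + (x - k) := by
    intro x
    rcases le_total x k with hx | hx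
    · rw [max_eq_right (by linarith), max_eq_left (by linarith)]; ring
    · rw [max_eq_left (by linarith), max_eq_right (by linarith)]; ring
  unfold cpot pot
  simp_rw [hpt]
  have hsub : Integrable (fun x : ℝ => x - k) eta := h.sub (integrable_const k)
  rw [integral_add (int_max2' h k) hsub, integral_sub h (integrable_const k), integral_const]
  simp [smul_eq_mul]
  rw [measureReal_def]
  ring

lemma tendsto_pot [IsFiniteMeasure eta] (h : Integrable (fun x => x) eta) :
    Tendsto (pot eta) atBot (nhds 0) := by
  have key := tendsto_integral_filter_of_dominated_convergence (μ := eta)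
    (F := fun (k : ℝ) (x : ℝ) => max (k - x) 0) (f := fun _ => (0:ℝ)) (l := atBot)
    (fun x => |x|)
    (Eventually.of_forall fun k => (int_max2' h k).1)
    (by
      filter_upwards [eventually_le_atBot (0:ℝ)] with k hk
      refine ae_of_all _ fun x => ?_
      rw [Real.norm_eq_abs, abs_of_nonneg (le_max_right _ _)]
      exact max_le (by linarith [neg_abs_le x, le_abs_self x, neg_le_abs x]) (abs_nonneg x))
    h.abs
    (by
      refine ae_of_all _ fun x => ?_
      have hev : (fun k : ℝ => max (k - x) 0) =ᶠ[atBot] fun _ => (0:ℝ) := by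
        filter_upwards [eventually_le_atBot x] with k hk
        rw [max_eq_right (by linarith)]
      exact Tendsto.congr' hev.symm tendsto_const_nhds)
  simp only [integral_zero] at key
  exact key

lemma tendsto_cpot [IsFiniteMeasure eta] (h : Integrable (fun x => x) eta) :
    Tendsto (cpot eta) atTop (nhds 0) := by
  have key := tendsto_integral_filter_of_dominated_convergence (μ := eta)
    (F := fun (k : ℝ) (x : ℝ) => max (x - k) 0) (f := fun _ => (0:ℝ)) (l := atTop)
    (fun x => |x|)
    (Eventually.of_forall fun k => (int_max1' h k).1)
    (by
      filter_upwards [eventually_ge_atTop (0:ℝ)] with k hk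
      refine ae_of_all _ fun x => ?_
      rw [Real.norm_eq_abs, abs_of_nonneg (le_max_right _ _)]
      exact max_le (by linarith [le_abs_self x]) (abs_nonneg x))
    h.abs
    (by
      refine ae_of_all _ fun x => ?_
      have hev : (fun k : ℝ => max (x - k) 0) =ᶠ[atTop] fun _ => (0:ℝ) := by
        filter_upwards [eventually_ge_atTop x] with k hk
        rw [max_eq_right (by linarith)]
      exact Tendsto.congr' hev.symm tendsto_const_nhds)
  simp only [integral_zero] at key
  exact key

lemma mean_eq [IsFiniteMeasure eta] [IsFiniteMeasure chi]
    (hinte : Integrable (fun x => x) eta) (hintc : Integrable (fun x => x) chi)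
    (hmass : eta Set.univ = chi Set.univ) (hE : ECx eta chi) :
    ∫ x, x ∂eta = ∫ x, x ∂chi := by
  have hM : (eta Set.univ).toReal = (chi Set.univ).toReal := by rw [hmass]
  have hpot : ∀ k, pot eta k ≤ pot chi k := fun k =>
    ecx_mono hE (convexOn_max_sub' k) (fun x => le_max_right _ _)
      (int_max2' hinte k) (int_max2' hintc k)
  have hcpot : ∀ k, cpot eta k ≤ cpot chi k := fun k =>
    ecx_mono hE (convexOn_max_sub k) (fun x => le_max_right _ _)
      (int_max1' hinte k) (int_max1' hintc k)
  have h1 : ∫ x, x ∂eta ≤ ∫ x, x ∂chi := by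
    have ht : Tendsto (fun k => pot chi k - pot eta k) atBot (nhds 0) := by
      simpa using (tendsto_pot hintc).sub (tendsto_pot hinte)
    refine sub_nonpos.1 (ge_of_tendsto ht (Eventually.of_forall fun k => ?_))
    have := hcpot k
    rw [cpot_eq hinte k, cpot_eq hintc k, hM] at this
    linarith
  have h2 : ∫ x, x ∂chi ≤ ∫ x, x ∂eta := by
    have ht : Tendsto (fun k => cpot chi k - cpot eta k) atTop (nhds 0) := by
      simpa using (tendsto_cpot hintc).sub (tendsto_cpot hinte)
    refine sub_nonpos.1 (ge_of_tendsto ht (Eventually.of_forall fun k => ?_))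
    have := hpot k
    have he := cpot_eq hinte k
    have hc := cpot_eq hintc k
    rw [hM] at he
    linarith
  linarith

end MT

theorem stmt8 (eta chi : Measure ℝ) [IsFiniteMeasure eta] [IsFiniteMeasure chi]
    (hinte : Integrable (fun x => x) eta) (hintc : Integrable (fun x => x) chi)
    (hmass : eta Set.univ = chi Set.univ)
    (hE : ECx eta chi) :
    Cx eta chi := by
  intro f hconv h1 h2
  obtain ⟨a, ha⟩ := exists_affine_minorant hconv
  have hil1 : Integrable (fun x : ℝ => f 0 + a * x) eta :=
    (integrable_const (f 0)).add (hinte.const_mul a)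
  have hil2 : Integrable (fun x : ℝ => f 0 + a * x) chi :=
    (integrable_const (f 0)).add (hintc.const_mul a)
  have hconc : ConcaveOn ℝ Set.univ (fun x : ℝ => f 0 + a * x) := by
    refine ⟨convex_univ, fun x _ y _ p q hp hq hpq => le_of_eq ?_⟩
    simp only [smul_eq_mul]
    linear_combination (f 0) * hpq
  have key : ∫ x, (f x - (f 0 + a * x)) ∂eta ≤ ∫ x, (f x - (f 0 + a * x)) ∂chi :=
    ecx_mono hE (hconv.sub hconc) (fun x => sub_nonneg.2 (ha x)) (h1.sub hil1) (h2.sub hil2)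
  rw [integral_sub h1 hil1, integral_sub h2 hil2] at key
  have hl : ∫ x, (f 0 + a * x) ∂eta = ∫ x, (f 0 + a * x) ∂chi := by
    rw [integral_add (integrable_const _) (hinte.const_mul a),
      integral_add (integrable_const _) (hintc.const_mul a),
      integral_const, integral_const, MeasureTheory.integral_const_mul, MeasureTheory.integral_const_mul,
      mean_eq hinte hintc hmass hE, measureReal_def, measureReal_def, hmass]
  linarith
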